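/- For distinct real numbers x_1,…,x_n, the following algebraic identity holds: Σ_{i=1}^n ( Σ_{j : j≠i} 1/(x_i - x_j) )² = Σ_{i≠j} 1/(x_i - x_j)². Equivalently, the triple sum Σ_i Σ_{j≠i} Σ_{k≠i, k≠j} 1/((x_i - x_j)(x_i - x_k)) vanishes. -/
import Mathlib

open Finset

private lemma key3 (a b c : ℝ) (hab : a ≠ b) (hbc : b ≠ c) (hac : a ≠ c) :
    1/((a-b)*(a-c)) + 1/((b-c)*(b-a)) + 1/((c-a)*(c-b)) = 0 := by
  have h1 : a - b ≠ 0 := sub_ne_zero.2 hab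
  have h2 : b - c ≠ 0 := sub_ne_zero.2 hbc
  have h3 : a - c ≠ 0 := sub_ne_zero.2 hac
  have h4 : b - a ≠ 0 := sub_ne_zero.2 hab.symm
  have h5 : c - b ≠ 0 := sub_ne_zero.2 hbc.symm
  have h6 : c - a ≠ 0 := sub_ne_zero.2 hac.symm
  field_simp
  ring

/-- for distinct reals `x_1,…,x_n`,
`Σ_i (Σ_{j≠i} 1/(x_i-x_j))² = Σ_{i≠j} 1/(x_i-x_j)²`; equivalently the triple sum
`Σ_i Σ_{j≠i} Σ_{k≠i,k≠j} 1/((x_i-x_j)(x_i-x_k))` vanishes. -/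
theorem stmt_9 (n : ℕ) (x : Fin n → ℝ) (hx : Function.Injective x) :
    (∑ i : Fin n, (∑ j ∈ Finset.univ.filter (· ≠ i), 1 / (x i - x j))^2
      = ∑ i : Fin n, ∑ j ∈ Finset.univ.filter (· ≠ i), 1 / (x i - x j)^2) ∧
    (∑ i : Fin n, ∑ j ∈ Finset.univ.filter (· ≠ i),
        ∑ k ∈ Finset.univ.filter (fun k => k ≠ i ∧ k ≠ j),
          1 / ((x i - x j) * (x i - x k)) = 0) := by
  classical
  have hxne : ∀ {i j : Fin n}, i ≠ j → x i ≠ x j := fun h e => h (hx e)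
  -- the if-version of the summand
  set g : Fin n → Fin n → Fin n → ℝ := fun i j k =>
    if j ≠ i ∧ k ≠ i ∧ k ≠ j then 1 / ((x i - x j) * (x i - x k)) else 0 with hg
  -- pointwise cyclic identity
  have hcyc : ∀ i j k : Fin n, g i j k + g j k i + g k i j = 0 := by
    intro i j k
    by_cases hd : i ≠ j ∧ j ≠ k ∧ i ≠ k
    · obtain ⟨h1, h2, h3⟩ := hd
      simp only [hg, h1, h2, h3, h1.symm, h2.symm, h3.symm, ne_eq, not_false_iff,
        and_self, if_true, true_and]
      exact key3 (x i) (x j) (x k) (hxne h1) (hxne h2) (hxne h3)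
    · push_neg at hd
      by_cases e1 : i = j
      · subst e1; simp [hg]
      by_cases e2 : j = k
      · subst e2; simp [hg]
      have e3 : i = k := hd e1 e2
      subst e3; simp [hg]
  -- rewrite the filtered sums as unrestricted sums of g
  have hrw : ∀ i : Fin n,
      (∑ j ∈ Finset.univ.filter (· ≠ i),
        ∑ k ∈ Finset.univ.filter (fun k => k ≠ i ∧ k ≠ j),
          1 / ((x i - x j) * (x i - x k))) = ∑ j : Fin n, ∑ k : Fin n, g i j k := by
    intro i
    rw [Finset.sum_filter]
    refine Finset.sum_congr rfl fun j _ => ?_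
    by_cases hji : j ≠ i
    · simp [hji, hg, Finset.sum_filter]
    · simp [hji, hg]
  -- the triple sum as a sum over triples
  set F : Fin n × Fin n × Fin n → ℝ := fun p => g p.1 p.2.1 p.2.2 with hF
  have hprod : (∑ i : Fin n, ∑ j : Fin n, ∑ k : Fin n, g i j k) = ∑ p, F p := by
    rw [Fintype.sum_prod_type]
    refine Finset.sum_congr rfl fun i _ => ?_
    rw [Fintype.sum_prod_type]
  -- cyclic permutation equiv
  set cyc : Equiv.Perm (Fin n × Fin n × Fin n) :=
    ⟨fun p => (p.2.1, p.2.2, p.1), fun p => (p.2.2, p.1, p.2.1),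
      fun p => rfl, fun p => rfl⟩ with hcycdef
  -- triple sum is zero
  have htriple : (∑ i : Fin n, ∑ j ∈ Finset.univ.filter (· ≠ i),
      ∑ k ∈ Finset.univ.filter (fun k => k ≠ i ∧ k ≠ j),
        1 / ((x i - x j) * (x i - x k))) = 0 := by
    have hS : (∑ i : Fin n, ∑ j ∈ Finset.univ.filter (· ≠ i),
        ∑ k ∈ Finset.univ.filter (fun k => k ≠ i ∧ k ≠ j),
          1 / ((x i - x j) * (x i - x k))) = ∑ p, F p := by
      rw [Finset.sum_congr rfl fun i _ => hrw i, hprod]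
    have h1 : (∑ p, F (cyc p)) = ∑ p, F p := Equiv.sum_comp cyc F
    have h2 : (∑ p, F (cyc (cyc p))) = ∑ p, F p := by
      calc (∑ p, F (cyc (cyc p))) = ∑ p, F (cyc p) :=
            Equiv.sum_comp cyc (fun q => F (cyc q))
        _ = ∑ p, F p := h1
    have hzero : (∑ p, F p) + (∑ p, F (cyc p)) + (∑ p, F (cyc (cyc p))) = 0 := by
      rw [← Finset.sum_add_distrib, ← Finset.sum_add_distrib]
      refine Finset.sum_eq_zero fun p _ => ?_
      have := hcyc p.1 p.2.1 p.2.2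
      simpa [hF, hcycdef] using this
    rw [h1, h2] at hzero
    rw [hS]
    linarith
  refine ⟨?_, htriple⟩
  -- expand the square
  have hexp : ∀ i : Fin n,
      (∑ j ∈ Finset.univ.filter (· ≠ i), 1 / (x i - x j))^2
        = (∑ j ∈ Finset.univ.filter (· ≠ i), 1 / (x i - x j)^2)
          + ∑ j ∈ Finset.univ.filter (· ≠ i),
              ∑ k ∈ Finset.univ.filter (fun k => k ≠ i ∧ k ≠ j),
                1 / ((x i - x j) * (x i - x k)) := by
    intro i
    rw [sq, Finset.sum_mul_sum, ← Finset.sum_add_distrib]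
    refine Finset.sum_congr rfl fun j hj => ?_
    have hji : j ≠ i := by simpa using hj
    have hjmem : j ∈ Finset.univ.filter (· ≠ i) := hj
    rw [← Finset.add_sum_erase _ _ hjmem]
    have herase : (Finset.univ.filter (· ≠ i)).erase j
        = Finset.univ.filter (fun k => k ≠ i ∧ k ≠ j) := by
      ext k
      simp [and_comm]
    rw [herase]
    congr 1
    · rw [div_mul_div_comm, one_mul, ← sq]
    · refine Finset.sum_congr rfl fun k _ => ?_
      rw [div_mul_div_comm, one_mul]
  calc (∑ i : Fin n, (∑ j ∈ Finset.univ.filter (· ≠ i), 1 / (x i - x j))^2)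
      = ∑ i : Fin n, ((∑ j ∈ Finset.univ.filter (· ≠ i), 1 / (x i - x j)^2)
          + ∑ j ∈ Finset.univ.filter (· ≠ i),
              ∑ k ∈ Finset.univ.filter (fun k => k ≠ i ∧ k ≠ j),
                1 / ((x i - x j) * (x i - x k))) :=
        Finset.sum_congr rfl fun i _ => hexp i
    _ = (∑ i : Fin n, ∑ j ∈ Finset.univ.filter (· ≠ i), 1 / (x i - x j)^2)
          + ∑ i : Fin n, ∑ j ∈ Finset.univ.filter (· ≠ i),
              ∑ k ∈ Finset.univ.filter (fun k => k ≠ i ∧ k ≠ j),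
                1 / ((x i - x j) * (x i - x k)) := Finset.sum_add_distrib
    _ = ∑ i : Fin n, ∑ j ∈ Finset.univ.filter (· ≠ i), 1 / (x i - x j)^2 := by
        rw [htriple, add_zero]
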